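/- Let M be a real symmetric n×n matrix, y ∈ ℝⁿ, ξ ∈ ℝ, and z ∈ ℂ with Im z ≠ 0. Then |Tr( (M + ξ y yᵀ − z I_n)⁻¹ − (M − z I_n)⁻¹ )| ≤ |ξ| ‖y‖₂² / (Im z)². -/

import Mathlib

open MeasureTheory ProbabilityTheory Filter Matrix

noncomputable section

/-- The empirical spectral distribution of a Hermitian (symmetric) real matrix:
`(card ι)⁻¹ ∑ i δ_{λ_i}` where `λ_i` are the eigenvalues. (Junk value `0` if the
matrix is not Hermitian.) -/
noncomputable def esd {ι : Type*} [Fintype ι] [DecidableEq ι] (M : Matrix ι ι ℝ) :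
    Measure ℝ :=
  if h : M.IsHermitian then
    ((Fintype.card ι : ENNReal))⁻¹ • ∑ i : ι, MeasureTheory.Measure.dirac (h.eigenvalues i)
  else 0

/-- The Stieltjes transform of a (non-negative Borel) measure on `ℝ`. -/
noncomputable def stieltjesT (N : Measure ℝ) (z : ℂ) : ℂ :=
  ∫ t : ℝ, ((t : ℂ) - z)⁻¹ ∂N

/-- `f` belongs to the class of Stieltjes transforms of finite non-negative Borel
measures on `ℝ` (for `Im z ≠ 0`). -/
def IsStieltjesTransform (f : ℂ → ℂ) : Prop :=
  ∃ N : Measure ℝ, IsFiniteMeasure N ∧ ∀ z : ℂ, z.im ≠ 0 → f z = stieltjesT N z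

/-- The `ℓ²→ℓ²` operator norm of a real matrix. -/
noncomputable def opNorm {ι : Type*} [Fintype ι] [DecidableEq ι] (D : Matrix ι ι ℝ) : ℝ :=
  ‖(Matrix.toEuclideanCLM (𝕜 := ℝ) D : EuclideanSpace ℝ ι →L[ℝ] EuclideanSpace ℝ ι)‖

/-- The Hilbert–Schmidt (Frobenius) norm of a real matrix. -/
noncomputable def hsNorm {ι : Type*} [Fintype ι] (B : Matrix ι ι ℝ) : ℝ :=
  Real.sqrt (∑ i : ι, ∑ j : ι, (B i j) ^ 2)

/-- Variance of a real random variable: `E (X - E X)²`. -/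
noncomputable def rvar {Ω : Type*} [MeasurableSpace Ω] (P : Measure Ω) (X : Ω → ℝ) : ℝ :=
  ∫ ω, (X ω - ∫ ω', X ω' ∂P) ^ 2 ∂P

/-- Variance of a complex random variable: `E |X - E X|²`. -/
noncomputable def cvar {Ω : Type*} [MeasurableSpace Ω] (P : Measure Ω) (X : Ω → ℂ) : ℝ :=
  ∫ ω, ‖X ω - ∫ ω', X ω' ∂P‖ ^ 2 ∂P

/-- The (uncentered) covariance matrix `Q = E[y yᵀ]` of a random vector. -/
noncomputable def covMatrix {Ω : Type*} [MeasurableSpace Ω] (P : Measure Ω) {ι : Type*}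
    [Fintype ι] (y : Ω → ι → ℝ) : Matrix ι ι ℝ :=
  Matrix.of fun i j => ∫ ω, y ω i * y ω j ∂P

/-- The cross-covariance matrix `E[x yᵀ]` of two random vectors. -/
noncomputable def crossCovMatrix {Ω : Type*} [MeasurableSpace Ω] (P : Measure Ω) {ι : Type*}
    [Fintype ι] (x y : Ω → ι → ℝ) : Matrix ι ι ℝ :=
  Matrix.of fun i j => ∫ ω, x ω i * y ω j ∂P

/-- Integral of a real function against a signed measure (via its Jordan decomposition). -/
noncomputable def sintegral (ν : MeasureTheory.SignedMeasure ℝ) (f : ℝ → ℝ) : ℝ :=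
  (∫ x, f x ∂ν.toJordanDecomposition.posPart) - ∫ x, f x ∂ν.toJordanDecomposition.negPart

/-- Integral of a complex function against a signed measure (via its Jordan decomposition). -/
noncomputable def sintegralC (ν : MeasureTheory.SignedMeasure ℝ) (f : ℝ → ℂ) : ℂ :=
  (∫ x, f x ∂ν.toJordanDecomposition.posPart) - ∫ x, f x ∂ν.toJordanDecomposition.negPart

/-- Convergence in probability (to a constant) of a sequence of real random variables, each
defined on its own probability space. -/
def TendstoInProb {Ω : ℕ → Type*} [∀ n, MeasurableSpace (Ω n)]
    (P : ∀ n, Measure (Ω n)) (X : ∀ n, Ω n → ℝ) (c : ℝ) : Prop :=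
  ∀ ε : ℝ, 0 < ε → Tendsto (fun n => P n {ω | ε ≤ |X n ω - c|}) atTop (nhds 0)

/-- Weak convergence in probability of random measures `μ n` to a deterministic measure `N`:
for every bounded continuous test function, the integrals converge in probability. -/
def WeakTendstoInProb {Ω : ℕ → Type*} [∀ n, MeasurableSpace (Ω n)]
    (P : ∀ n, Measure (Ω n)) (μ : ∀ n, Ω n → Measure ℝ) (N : Measure ℝ) : Prop :=
  ∀ φ : ℝ → ℝ, Continuous φ → (∃ C : ℝ, ∀ x, |φ x| ≤ C) →
    TendstoInProb P (fun n ω => ∫ x, φ x ∂(μ n ω)) (∫ x, φ x ∂N)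

/-- The resolvent `(M - z)⁻¹` of a real matrix, viewed as a complex matrix. -/
noncomputable def resolventM {ι : Type*} [Fintype ι] [DecidableEq ι]
    (M : Matrix ι ι ℝ) (z : ℂ) : Matrix ι ι ℂ :=
  (M.map (fun a => (a : ℂ)) - z • 1)⁻¹

/-- The bilinear form `(B u, v) = vᵀ B u` for a complex matrix and real vectors. -/
noncomputable def bformC {ι : Type*} [Fintype ι] (B : Matrix ι ι ℂ) (u v : ι → ℝ) : ℂ :=
  dotProduct (fun i => (v i : ℂ)) (B.mulVec fun i => (u i : ℂ))

end
section Aux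
open Matrix Complex

private noncomputable def en {n : ℕ} (x : Fin n → ℂ) : ℝ := Real.sqrt (∑ i, ‖x i‖ ^ 2)

private lemma en_nonneg {n : ℕ} (x : Fin n → ℂ) : 0 ≤ en x := Real.sqrt_nonneg _

private lemma en_eq_norm {n : ℕ} (x : Fin n → ℂ) :
    en x = ‖(WithLp.equiv 2 (Fin n → ℂ)).symm x‖ := by
  rw [EuclideanSpace.norm_eq]; rfl

private lemma cs_dot {n : ℕ} (x u : Fin n → ℂ) :
    ‖star x ⬝ᵥ u‖ ≤ en x * en u := by
  have h := norm_inner_le_norm (𝕜 := ℂ)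
    ((WithLp.equiv 2 (Fin n → ℂ)).symm x) ((WithLp.equiv 2 (Fin n → ℂ)).symm u)
  rw [← en_eq_norm, ← en_eq_norm] at h
  have he : (inner ℂ ((WithLp.equiv 2 (Fin n → ℂ)).symm x) ((WithLp.equiv 2 (Fin n → ℂ)).symm u) : ℂ)
      = star x ⬝ᵥ u := by
    simp [PiLp.inner_apply, dotProduct, RCLike.inner_apply, Pi.star_apply, RCLike.star_def, mul_comm]
  rw [he] at h
  simpa using h

private lemma en_eq_zero_iff {n : ℕ} (x : Fin n → ℂ) : en x = 0 ↔ x = 0 := by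
  rw [en, Real.sqrt_eq_zero (by positivity)]
  constructor
  · intro h
    ext i
    have := (Finset.sum_eq_zero_iff_of_nonneg (fun i _ => by positivity)).1 h i (Finset.mem_univ i)
    simpa [pow_eq_zero_iff, norm_eq_zero] using this
  · intro h; simp [h]

private lemma coercive {n : ℕ} (H : Matrix (Fin n) (Fin n) ℂ) (hH : H.IsHermitian) (z : ℂ)
    (x : Fin n → ℂ) : |z.im| * en x ≤ en ((H - z • 1) *ᵥ x) := by
  set w := (H - z • 1) *ᵥ x with hw
  set s : ℝ := ∑ i, ‖x i‖ ^ 2 with hs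
  have hsnn : 0 ≤ s := by positivity
  -- quadratic form of H is real
  have hreal : (star x ⬝ᵥ (H *ᵥ x)).im = 0 := by
    rw [← Complex.conj_eq_iff_im]
    calc (starRingEnd ℂ) (star x ⬝ᵥ (H *ᵥ x))
        = star (star x ⬝ᵥ (H *ᵥ x)) := rfl
      _ = star (H *ᵥ x) ⬝ᵥ star (star x) := by rw [star_dotProduct_star]
      _ = (star x ᵥ* Hᴴ) ⬝ᵥ x := by rw [star_mulVec, star_star]
      _ = star x ⬝ᵥ (Hᴴ *ᵥ x) := by rw [dotProduct_mulVec]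
      _ = star x ⬝ᵥ (H *ᵥ x) := by rw [hH]
  have hzx : star x ⬝ᵥ ((z • (1 : Matrix (Fin n) (Fin n) ℂ)) *ᵥ x) = z * (s : ℂ) := by
    have hterm : ∀ i, (star x) i * x i = ((‖x i‖ ^ 2 : ℝ) : ℂ) := by
      intro i
      rw [Pi.star_apply, RCLike.star_def]
      rw [mul_comm, Complex.mul_conj]
      rw [Complex.normSq_eq_norm_sq]
    simp only [Matrix.smul_mulVec, Matrix.one_mulVec, dotProduct_smul, smul_eq_mul, hs]
    rw [dotProduct]
    push_cast
    congr 1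
    rw [Finset.sum_congr rfl fun i _ => hterm i]
    push_cast
    ring
  have him : (star x ⬝ᵥ w).im = -z.im * s := by
    rw [hw, Matrix.sub_mulVec, dotProduct_sub, Complex.sub_im, hreal, hzx]
    simp [Complex.mul_im]
  have h1 : |z.im| * s ≤ ‖star x ⬝ᵥ w‖ := by
    calc |z.im| * s = |(star x ⬝ᵥ w).im| := by
          rw [him, abs_mul (-z.im) s, abs_neg, _root_.abs_of_nonneg hsnn]
      _ ≤ ‖star x ⬝ᵥ w‖ := Complex.abs_im_le_norm _
  have h2 := cs_dot x w
  have hxen : en x * en x = s := by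
    rw [en, ← hs, Real.mul_self_sqrt hsnn]
  rcases eq_or_lt_of_le (en_nonneg x) with h0 | h0
  · rw [← h0, mul_zero]; exact en_nonneg w
  · have : |z.im| * (en x * en x) ≤ en x * en w := by
      rw [hxen]; exact h1.trans h2
    nlinarith [en_nonneg w, abs_nonneg z.im]

private lemma resolvent_isUnit {n : ℕ} (H : Matrix (Fin n) (Fin n) ℂ) (hH : H.IsHermitian) (z : ℂ)
    (hz : z.im ≠ 0) : IsUnit (H - z • 1) := by
  rw [← Matrix.mulVec_injective_iff_isUnit]
  intro a b hab
  have h := coercive H hH z (a - b)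
  rw [Matrix.mulVec_sub, hab, sub_self] at h
  have h0 : en (0 : Fin n → ℂ) = 0 := by simp [en]
  rw [h0] at h
  have : en (a - b) = 0 := le_antisymm (by
    by_contra hc
    push_neg at hc
    have := en_nonneg (a - b)
    nlinarith [abs_pos.2 hz]) (en_nonneg _)
  have := (en_eq_zero_iff _).1 this
  exact sub_eq_zero.1 this

private lemma resolvent_bound {n : ℕ} (H : Matrix (Fin n) (Fin n) ℂ) (hH : H.IsHermitian) (z : ℂ)
    (hz : z.im ≠ 0) (w : Fin n → ℂ) :
    en ((H - z • 1)⁻¹ *ᵥ w) ≤ en w / |z.im| := by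
  have hu := resolvent_isUnit H hH z hz
  have hdet : IsUnit (H - z • 1).det := (Matrix.isUnit_iff_isUnit_det _).1 hu
  have key : (H - z • 1) *ᵥ ((H - z • 1)⁻¹ *ᵥ w) = w := by
    rw [Matrix.mulVec_mulVec, Matrix.mul_nonsing_inv _ hdet, Matrix.one_mulVec]
  have h := coercive H hH z ((H - z • 1)⁻¹ *ᵥ w)
  rw [key] at h
  rw [le_div_iff₀ (abs_pos.2 hz)]
  linarith [h]

private lemma trace_mul_vecMulVec {n : ℕ} (P : Matrix (Fin n) (Fin n) ℂ) (v w : Fin n → ℂ) :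
    Matrix.trace (P * Matrix.vecMulVec v w) = w ⬝ᵥ (P *ᵥ v) := by
  simp only [Matrix.trace, Matrix.diag_apply, Matrix.mul_apply, Matrix.vecMulVec_apply,
    dotProduct, Matrix.mulVec, Finset.mul_sum]
  exact Finset.sum_congr rfl fun i _ => Finset.sum_congr rfl fun j _ => by ring

private theorem trace_rank_one_resolvent_bound' (n : ℕ) (M : Matrix (Fin n) (Fin n) ℝ)
    (hM : M.IsHermitian) (y : Fin n → ℝ) (ξ : ℝ) (z : ℂ) (hz : z.im ≠ 0) :
    ‖Matrix.trace
        ((((M + ξ • Matrix.vecMulVec y y).map (fun a => (a : ℂ)) - z • 1)⁻¹) -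
         ((M.map (fun a => (a : ℂ)) - z • 1)⁻¹))‖ ≤
      |ξ| * (∑ i, y i ^ 2) / z.im ^ 2 := by
  classical
  set yc : Fin n → ℂ := fun i => (y i : ℂ) with hyc
  have hstar : star yc = yc := by
    ext i; simp [hyc]
  -- symmetry of the perturbed matrix
  have hvv : (Matrix.vecMulVec y y).IsHermitian := by
    unfold Matrix.IsHermitian
    ext i j
    simp [Matrix.vecMulVec_apply, mul_comm]
  have hM2 : (M + ξ • Matrix.vecMulVec y y).IsHermitian := by
    refine hM.add ?_
    unfold Matrix.IsHermitian at hvv ⊢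
    ext i j
    simpa using congrArg (fun X => ξ * X i j) hvv
  set Hc := M.map (fun a => (a : ℂ)) with hHcdef
  set H2 := (M + ξ • Matrix.vecMulVec y y).map (fun a => (a : ℂ)) with hH2def
  have hHc : Hc.IsHermitian := hM.map _ (by intro a; simp)
  have hH2 : H2.IsHermitian := hM2.map _ (by intro a; simp)
  set A := H2 - z • 1 with hAdef
  set B := Hc - z • 1 with hBdef
  have hAu : IsUnit A.det := (Matrix.isUnit_iff_isUnit_det _).1 (resolvent_isUnit H2 hH2 z hz)
  have hBu : IsUnit B.det := (Matrix.isUnit_iff_isUnit_det _).1 (resolvent_isUnit Hc hHc z hz)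
  have hmap : H2 = Hc + (ξ : ℂ) • Matrix.vecMulVec yc yc := by
    ext i j
    simp [hH2def, hHcdef, hyc, Matrix.map_apply, Matrix.vecMulVec_apply]
  have hBA : B - A = -((ξ : ℂ) • Matrix.vecMulVec yc yc) := by
    rw [hAdef, hBdef, hmap]; abel
  -- resolvent identity
  have hres : A⁻¹ - B⁻¹ = A⁻¹ * (B - A) * B⁻¹ := by
    have h1 : A⁻¹ * A = 1 := Matrix.nonsing_inv_mul _ hAu
    have h2 : B * B⁻¹ = 1 := Matrix.mul_nonsing_inv _ hBu
    calc A⁻¹ - B⁻¹ = A⁻¹ * (B * B⁻¹) - (A⁻¹ * A) * B⁻¹ := by rw [h1, h2, mul_one, one_mul]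
      _ = A⁻¹ * (B - A) * B⁻¹ := by noncomm_ring
  have htr : Matrix.trace (A⁻¹ - B⁻¹) = -((ξ : ℂ) * (yc ⬝ᵥ ((B⁻¹ * A⁻¹) *ᵥ yc))) := by
    rw [hres, hBA]
    rw [show A⁻¹ * -((ξ : ℂ) • Matrix.vecMulVec yc yc) * B⁻¹
        = -((ξ : ℂ) • (A⁻¹ * Matrix.vecMulVec yc yc * B⁻¹)) by
      simp [Matrix.mul_smul, Matrix.smul_mul, mul_assoc]]
    rw [Matrix.trace_neg, Matrix.trace_smul]
    rw [Matrix.trace_mul_cycle (A⁻¹) (Matrix.vecMulVec yc yc) (B⁻¹)]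
    rw [trace_mul_vecMulVec]
    simp
  rw [htr]
  rw [norm_neg, norm_mul]
  have habs : ‖(ξ : ℂ)‖ = |ξ| := by simp
  rw [habs]
  -- now bound the quadratic form
  have hsplit : (B⁻¹ * A⁻¹) *ᵥ yc = B⁻¹ *ᵥ (A⁻¹ *ᵥ yc) := (Matrix.mulVec_mulVec _ _ _).symm
  have hcs : ‖yc ⬝ᵥ ((B⁻¹ * A⁻¹) *ᵥ yc)‖ ≤ en yc * en (B⁻¹ *ᵥ (A⁻¹ *ᵥ yc)) := by
    rw [hsplit]
    calc ‖yc ⬝ᵥ (B⁻¹ *ᵥ (A⁻¹ *ᵥ yc))‖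
        = ‖star yc ⬝ᵥ (B⁻¹ *ᵥ (A⁻¹ *ᵥ yc))‖ := by rw [hstar]
      _ ≤ _ := cs_dot _ _
  have hb1 : en (B⁻¹ *ᵥ (A⁻¹ *ᵥ yc)) ≤ en (A⁻¹ *ᵥ yc) / |z.im| :=
    resolvent_bound Hc hHc z hz _
  have hb2 : en (A⁻¹ *ᵥ yc) ≤ en yc / |z.im| := resolvent_bound H2 hH2 z hz _
  have hen : en yc * en yc = ∑ i, y i ^ 2 := by
    rw [en, Real.mul_self_sqrt (by positivity)]
    exact Finset.sum_congr rfl fun i _ => by simp [hyc, sq_abs]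
  have himpos : (0:ℝ) < |z.im| := abs_pos.2 hz
  have h3 : en (B⁻¹ *ᵥ (A⁻¹ *ᵥ yc)) ≤ en yc / |z.im| / |z.im| := by
    refine hb1.trans ?_
    exact div_le_div_of_nonneg_right hb2 himpos.le |>.trans_eq rfl
  have hfinal : ‖yc ⬝ᵥ ((B⁻¹ * A⁻¹) *ᵥ yc)‖ ≤ (∑ i, y i ^ 2) / z.im ^ 2 := by
    have h4 : en yc * (en yc / |z.im| / |z.im|) = (∑ i, y i ^ 2) / z.im ^ 2 := by
      rw [← hen, ← _root_.sq_abs z.im]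
      field_simp
    calc ‖yc ⬝ᵥ ((B⁻¹ * A⁻¹) *ᵥ yc)‖
        ≤ en yc * en (B⁻¹ *ᵥ (A⁻¹ *ᵥ yc)) := hcs
      _ ≤ en yc * (en yc / |z.im| / |z.im|) :=
          mul_le_mul_of_nonneg_left h3 (en_nonneg _)
      _ = _ := h4
  calc |ξ| * ‖yc ⬝ᵥ ((B⁻¹ * A⁻¹) *ᵥ yc)‖
      ≤ |ξ| * ((∑ i, y i ^ 2) / z.im ^ 2) := mul_le_mul_of_nonneg_left hfinal (abs_nonneg ξ)
    _ = |ξ| * (∑ i, y i ^ 2) / z.im ^ 2 := by ring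

end Aux

/-- `|Tr((M + ξ y yᵀ − z)⁻¹ − (M − z)⁻¹)| ≤ |ξ| ‖y‖₂² / (Im z)²`. -/
theorem trace_rank_one_resolvent_bound (n : ℕ) (M : Matrix (Fin n) (Fin n) ℝ)
    (hM : M.IsHermitian) (y : Fin n → ℝ) (ξ : ℝ) (z : ℂ) (hz : z.im ≠ 0) :
    ‖Matrix.trace
        (resolventM (M + ξ • Matrix.vecMulVec y y) z - resolventM M z)‖ ≤
      |ξ| * (∑ i, y i ^ 2) / z.im ^ 2 := by
  simp only [resolventM]
  exact trace_rank_one_resolvent_bound' n M hM y ξ z hz
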